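/- A topological space X is Q*-normal if and only if for every pair of Q*-open subsets U and V of X whose union is X, there exist closed subsets G and H of X such that G ⊆ U, H ⊆ V, and G ∪ H = X. -/
import Mathlib

open Set Topology

def QStarClosed {X : Type*} [TopologicalSpace X] (A : Set X) : Prop :=
  IsClosed A ∧ interior A = ∅

def QStarOpen {X : Type*} [TopologicalSpace X] (A : Set X) : Prop :=
  QStarClosed Aᶜ

def GClosed {X : Type*} [TopologicalSpace X] (A : Set X) : Prop :=
  ∀ U : Set X, IsOpen U → A ⊆ U → closure A ⊆ U

def QStarGClosed {X : Type*} [TopologicalSpace X] (A : Set X) : Prop :=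
  ∀ U : Set X, QStarOpen U → A ⊆ U → closure A ⊆ U

def QStarGOpen {X : Type*} [TopologicalSpace X] (A : Set X) : Prop :=
  QStarGClosed Aᶜ

def QStarNormal (X : Type*) [TopologicalSpace X] : Prop :=
  ∀ A B : Set X, QStarClosed A → QStarClosed B → Disjoint A B →
    ∃ U V : Set X, IsOpen U ∧ IsOpen V ∧ A ⊆ U ∧ B ⊆ V ∧ Disjoint U V

def NormalSp (X : Type*) [TopologicalSpace X] : Prop :=
  ∀ A B : Set X, IsClosed A → IsClosed B → Disjoint A B →
    ∃ U V : Set X, IsOpen U ∧ IsOpen V ∧ A ⊆ U ∧ B ⊆ V ∧ Disjoint U V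

def GNormal (X : Type*) [TopologicalSpace X] : Prop :=
  ∀ A B : Set X, GClosed A → GClosed B → Disjoint A B →
    ∃ U V : Set X, IsOpen U ∧ IsOpen V ∧ A ⊆ U ∧ B ⊆ V ∧ Disjoint U V

theorem stmt12 {X : Type*} [TopologicalSpace X] :
    QStarNormal X ↔
      ∀ U V : Set X, QStarOpen U → QStarOpen V → U ∪ V = Set.univ →
        ∃ G H : Set X, IsClosed G ∧ IsClosed H ∧ G ⊆ U ∧ H ⊆ V ∧ G ∪ H = Set.univ := by
  constructor
  · intro h U V hU hV huv
    obtain ⟨U', V', hU', hV', hAU, hBV, hdisj⟩ :=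
      h Uᶜ Vᶜ hU hV (by
        rw [Set.disjoint_iff_inter_eq_empty, ← Set.compl_union, huv, Set.compl_univ])
    refine ⟨U'ᶜ, V'ᶜ, hU'.isClosed_compl, hV'.isClosed_compl, ?_, ?_, ?_⟩
    · simpa using Set.compl_subset_compl.mpr hAU
    · simpa using Set.compl_subset_compl.mpr hBV
    · rw [← Set.compl_inter, Set.compl_empty_iff.symm, compl_compl]
      exact Set.disjoint_iff_inter_eq_empty.mp hdisj
  · intro h A B hA hB hdisj
    obtain ⟨G, H, hG, hH, hGA, hHB, hGH⟩ :=
      h Aᶜ Bᶜ (by simpa [QStarOpen, compl_compl] using hA)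
        (by simpa [QStarOpen, compl_compl] using hB)
        (by rw [← Set.compl_inter, Set.compl_empty_iff.symm, compl_compl]
            exact Set.disjoint_iff_inter_eq_empty.mp hdisj)
    refine ⟨Gᶜ, Hᶜ, hG.isOpen_compl, hH.isOpen_compl, ?_, ?_, ?_⟩
    · exact Set.subset_compl_comm.mp hGA
    · exact Set.subset_compl_comm.mp hHB
    · rw [Set.disjoint_iff_inter_eq_empty, ← Set.compl_union, hGH, Set.compl_univ]
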